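/- Let A be a unital associative algebra over ℂ and let ψ_{ij} (i,j ∈ Fin N, N ≥ 2) be elements of A satisfying ∑_i ψ_{ii} = 0 and the anticommutation relations ψ_{ij}ψ_{kl} + ψ_{kl}ψ_{ij} = 2(δ_{il}δ_{jk} − (1/N)δ_{ij}δ_{kl})·1. Then ∑_{i,j,k,l} ψ_{ij}ψ_{jk}ψ_{kl}ψ_{li} = (N² − 1)(2N − 1/N)·1; in particular this element is a scalar bounded by 2N³. -/

import Mathlib

private noncomputable def dl {N : ℕ} (i j : Fin N) : ℂ := if i = j then 1 else 0

private noncomputable def cf (N : ℕ) (i j k l : Fin N) : ℂ :=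
  2 * (dl i l * dl j k - (1/(N:ℂ)) * dl i j * dl k l)

private lemma dl_symm {N : ℕ} (i j : Fin N) : dl i j = dl j i := by
  simp [dl, eq_comm]

private lemma dl_self {N : ℕ} (i : Fin N) : dl i i = 1 := by simp [dl]

private lemma sum_dl_mul {N : ℕ} (i k : Fin N) :
    ∑ j : Fin N, dl i j * dl j k = dl i k := by
  have : ∀ j : Fin N, dl i j * dl j k = if i = j then dl j k else 0 := by
    intro j; simp [dl]; split_ifs <;> simp
  simp [this, Finset.sum_ite_eq]

private lemma lem1 (N : ℕ) (i k : Fin N) :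
    ∑ j : Fin N, cf N i j j k = (2*((N:ℂ) - 1/(N:ℂ))) * dl i k := by
  simp only [cf, dl_self, mul_one, mul_sub, Finset.sum_sub_distrib]
  rw [Finset.sum_const, Finset.card_univ, Fintype.card_fin]
  have : ∑ j : Fin N, 2 * ((1:ℂ)/(N:ℂ) * dl i j * dl j k)
      = 2 * ((1:ℂ)/(N:ℂ)) * dl i k := by
    rw [← sum_dl_mul i k, Finset.mul_sum]
    exact Finset.sum_congr rfl fun j _ => by ring
  rw [this, nsmul_eq_mul]
  ring

private lemma lem3 (N : ℕ) (j l : Fin N) :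
    ∑ i : Fin N, cf N i j l i = (2*((N:ℂ) - 1/(N:ℂ))) * dl j l := by
  simp only [cf, dl_self, one_mul, mul_sub, Finset.sum_sub_distrib]
  rw [Finset.sum_const, Finset.card_univ, Fintype.card_fin]
  have : ∑ i : Fin N, 2 * ((1:ℂ)/(N:ℂ) * dl i j * dl l i)
      = 2 * ((1:ℂ)/(N:ℂ)) * dl j l := by
    have e : ∑ i : Fin N, dl l i * dl i j = dl l j := sum_dl_mul l j
    rw [dl_symm j l, ← e, Finset.mul_sum]
    exact Finset.sum_congr rfl fun i _ => by ring
  rw [this, nsmul_eq_mul]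
  ring

private lemma cf_split (N : ℕ) (i j k l : Fin N) :
    cf N i j k l = 2 * (dl i l * dl j k) - (2/(N:ℂ)) * (dl i j * dl k l) := by
  simp only [cf]; ring

private lemma cyc4 {M : Type*} [AddCommMonoid M] {n : ℕ}
    (f : Fin n → Fin n → Fin n → Fin n → M) :
    ∑ i, ∑ j, ∑ k, ∑ l, f i j k l = ∑ j, ∑ k, ∑ l, ∑ i, f i j k l :=
  calc ∑ i, ∑ j, ∑ k, ∑ l, f i j k l
      = ∑ j, ∑ i, ∑ k, ∑ l, f i j k l := Finset.sum_comm
    _ = ∑ j, ∑ k, ∑ i, ∑ l, f i j k l :=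
        Finset.sum_congr rfl fun _ _ => Finset.sum_comm
    _ = ∑ j, ∑ k, ∑ l, ∑ i, f i j k l :=
        Finset.sum_congr rfl fun _ _ => Finset.sum_congr rfl fun _ _ => Finset.sum_comm

private lemma quad {A : Type*} [Ring A] [Algebra ℂ A] (a b c d : A) (s1 s2 s3 : ℂ)
    (h1 : a*b + b*a = s1 • (1:A)) (h2 : a*c + c*a = s2 • (1:A))
    (h3 : a*d + d*a = s3 • (1:A)) :
    a*b*c*d + b*c*d*a = s1•(c*d) - s2•(b*d) + s3•(b*c) := by
  have key : a*b*c*d + b*c*d*a - (s1•(c*d) - s2•(b*d) + s3•(b*c)) =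
      (a*b + b*a - s1•(1:A))*(c*d) - b*((a*c + c*a - s2•(1:A))*d)
        + (b*c)*(a*d + d*a - s3•(1:A)) := by
    simp only [sub_mul, add_mul, mul_sub, mul_add, smul_mul_assoc, mul_smul_comm,
      one_mul, mul_one, mul_assoc]
    abel
  rw [h1, h2, h3] at key
  simp only [sub_self, zero_mul, mul_zero, sub_zero, zero_sub, add_zero, neg_zero,
    zero_add] at key
  exact sub_eq_zero.mp key

/-- In a unital associative ℂ-algebra, Majorana fermions `ψ i j`
in the adjoint of `SU(N)` (traceless, with the given Clifford anticommutation relations)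
satisfy `∑ ψ_{ij} ψ_{jk} ψ_{kl} ψ_{li} = (N²−1)(2N−1/N) • 1`, and this scalar is at most `2N³`. -/
theorem stmt_0 {A : Type*} [Ring A] [Algebra ℂ A] (N : ℕ) (hN : 2 ≤ N)
    (ψ : Fin N → Fin N → A)
    (htrace : ∑ i, ψ i i = 0)
    (hanti : ∀ i j k l, ψ i j * ψ k l + ψ k l * ψ i j =
      ((2 : ℂ) * ((if i = l then 1 else 0) * (if j = k then 1 else 0)
        - (1 / (N : ℂ)) * (if i = j then 1 else 0) * (if k = l then 1 else 0))) • (1 : A)) :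
    (∑ i, ∑ j, ∑ k, ∑ l, ψ i j * ψ j k * ψ k l * ψ l i) =
      (((N : ℂ) ^ 2 - 1) * (2 * (N : ℂ) - 1 / (N : ℂ))) • (1 : A) ∧
    ((N : ℝ) ^ 2 - 1) * (2 * (N : ℝ) - 1 / (N : ℝ)) ≤ 2 * (N : ℝ) ^ 3 := by
  have hN0 : (N:ℂ) ≠ 0 := Nat.cast_ne_zero.mpr (by omega)
  have hanti' : ∀ i j k l, ψ i j * ψ k l + ψ k l * ψ i j = cf N i j k l • (1:A) := by
    intro i j k l
    simpa [cf, dl] using hanti i j k l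
  -- the basic pair sum
  have hL1 : ∑ i, ∑ j, ψ i j * ψ j i = (((N:ℂ)^2 - 1)) • (1 : A) := by
    have hsym : ∑ i, ∑ j, ψ j i * ψ i j = ∑ i, ∑ j, ψ i j * ψ j i := Finset.sum_comm
    have h2 : (2:ℂ) • (∑ i, ∑ j, ψ i j * ψ j i) = ((2:ℂ) * ((N:ℂ)^2 - 1)) • (1:A) := by
      have e1 : ∑ i, ∑ j, (ψ i j * ψ j i + ψ j i * ψ i j) =
          ∑ i : Fin N, ∑ j : Fin N, ((2:ℂ) * ((1:ℂ) - (1/(N:ℂ)) * (if i = j then 1 else 0))) • (1:A) := by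
        refine Finset.sum_congr rfl fun i _ => Finset.sum_congr rfl fun j _ => ?_
        rw [hanti i j j i]
        congr 1
        by_cases h : i = j <;> simp [h]
      have e2 : ∑ i : Fin N, ∑ j : Fin N, ((2:ℂ) * ((1:ℂ) - (1/(N:ℂ)) * (if i = j then 1 else 0))) • (1:A)
          = ((2:ℂ) * ((N:ℂ)^2 - 1)) • (1:A) := by
        simp only [← Finset.sum_smul]
        congr 1
        simp [mul_sub, Finset.sum_sub_distrib, Finset.mul_sum, mul_ite, mul_one, mul_zero,
          Finset.sum_ite_eq, Finset.card_univ]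
        field_simp
      calc (2:ℂ) • (∑ i, ∑ j, ψ i j * ψ j i)
          = ∑ i, ∑ j, (ψ i j * ψ j i + ψ j i * ψ i j) := by
            rw [two_smul]
            simp only [Finset.sum_add_distrib]
            rw [hsym]
        _ = ((2:ℂ) * ((N:ℂ)^2 - 1)) • (1:A) := e1.trans e2
    have := congrArg (fun x => (2:ℂ)⁻¹ • x) h2
    simpa [smul_smul, mul_assoc, inv_mul_cancel₀ (two_ne_zero (α := ℂ))] using this
  -- pointwise key identity
  have key : ∀ i j k l, ψ i j * ψ j k * ψ k l * ψ l i + ψ j k * ψ k l * ψ l i * ψ i j =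
      cf N i j j k • (ψ k l * ψ l i) - cf N i j k l • (ψ j k * ψ l i)
        + cf N i j l i • (ψ j k * ψ k l) := fun i j k l =>
    quad _ _ _ _ _ _ _ (hanti' i j j k) (hanti' i j k l) (hanti' i j l i)
  -- the three contracted sums
  have hT1 : ∑ i, ∑ j, ∑ k, ∑ l, cf N i j j k • (ψ k l * ψ l i)
      = ((2*((N:ℂ) - 1/(N:ℂ))) * ((N:ℂ)^2 - 1)) • (1:A) :=
    calc ∑ i, ∑ j, ∑ k, ∑ l, cf N i j j k • (ψ k l * ψ l i)
        = ∑ i, ∑ k, ∑ j, ∑ l, cf N i j j k • (ψ k l * ψ l i) :=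
          Finset.sum_congr rfl fun _ _ => Finset.sum_comm
      _ = ∑ i, ∑ k, (∑ j, cf N i j j k) • (∑ l, ψ k l * ψ l i) := by
          refine Finset.sum_congr rfl fun i _ => Finset.sum_congr rfl fun k _ => ?_
          rw [Finset.sum_smul]
          exact Finset.sum_congr rfl fun j _ => (Finset.smul_sum).symm
      _ = ∑ i, ∑ k, ((2*((N:ℂ) - 1/(N:ℂ))) * dl i k) • (∑ l, ψ k l * ψ l i) := by
          simp only [lem1]
      _ = ∑ i, (2*((N:ℂ) - 1/(N:ℂ))) • (∑ l, ψ i l * ψ l i) := by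
          refine Finset.sum_congr rfl fun i _ => ?_
          simp [dl, mul_ite, mul_one, mul_zero, ite_smul, zero_smul, Finset.sum_ite_eq]
      _ = (2*((N:ℂ) - 1/(N:ℂ))) • (∑ i, ∑ l, ψ i l * ψ l i) := (Finset.smul_sum).symm
      _ = ((2*((N:ℂ) - 1/(N:ℂ))) * ((N:ℂ)^2 - 1)) • (1:A) := by rw [hL1, smul_smul]
  have hT3 : ∑ i, ∑ j, ∑ k, ∑ l, cf N i j l i • (ψ j k * ψ k l)
      = ((2*((N:ℂ) - 1/(N:ℂ))) * ((N:ℂ)^2 - 1)) • (1:A) :=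
    calc ∑ i, ∑ j, ∑ k, ∑ l, cf N i j l i • (ψ j k * ψ k l)
        = ∑ j, ∑ k, ∑ l, ∑ i, cf N i j l i • (ψ j k * ψ k l) := cyc4 _
      _ = ∑ j, ∑ k, ∑ l, ((2*((N:ℂ) - 1/(N:ℂ))) * dl j l) • (ψ j k * ψ k l) := by
          refine Finset.sum_congr rfl fun j _ => Finset.sum_congr rfl fun k _ =>
            Finset.sum_congr rfl fun l _ => ?_
          rw [← Finset.sum_smul, lem3]
      _ = ∑ j, ∑ k, (2*((N:ℂ) - 1/(N:ℂ))) • (ψ j k * ψ k j) := by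
          refine Finset.sum_congr rfl fun j _ => Finset.sum_congr rfl fun k _ => ?_
          simp [dl, mul_ite, mul_one, mul_zero, ite_smul, zero_smul, Finset.sum_ite_eq]
      _ = (2*((N:ℂ) - 1/(N:ℂ))) • (∑ j, ∑ k, ψ j k * ψ k j) := by
          rw [Finset.smul_sum]
          exact Finset.sum_congr rfl fun _ _ => (Finset.smul_sum).symm
      _ = ((2*((N:ℂ) - 1/(N:ℂ))) * ((N:ℂ)^2 - 1)) • (1:A) := by rw [hL1, smul_smul]
  have hT2 : ∑ i, ∑ j, ∑ k, ∑ l, cf N i j k l • (ψ j k * ψ l i)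
      = (0:A) - ((2/(N:ℂ)) * ((N:ℂ)^2 - 1)) • (1:A) := by
    have hsplit : ∀ i j k l : Fin N, cf N i j k l • (ψ j k * ψ l i) =
        ((2:ℂ) * (dl i l * dl j k)) • (ψ j k * ψ l i)
          - ((2/(N:ℂ)) * (dl i j * dl k l)) • (ψ j k * ψ l i) := by
      intro i j k l
      rw [← sub_smul, ← cf_split]
    have hT2a : ∑ i, ∑ j, ∑ k, ∑ l, ((2:ℂ) * (dl i l * dl j k)) • (ψ j k * ψ l i) = 0 :=
      calc ∑ i, ∑ j, ∑ k, ∑ l, ((2:ℂ) * (dl i l * dl j k)) • (ψ j k * ψ l i)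
          = ∑ i, ∑ j, (2:ℂ) • (ψ j j * ψ i i) := by
            refine Finset.sum_congr rfl fun i _ => Finset.sum_congr rfl fun j _ => ?_
            simp [dl, mul_ite, ite_mul, mul_one, mul_zero, zero_mul, one_mul, ite_smul,
              zero_smul, Finset.sum_ite_eq]
        _ = ∑ i : Fin N, (2:ℂ) • ((∑ j, ψ j j) * ψ i i) := by
            refine Finset.sum_congr rfl fun i _ => ?_
            rw [← Finset.smul_sum, ← Finset.sum_mul]
        _ = 0 := by simp [htrace]
    have hT2b : ∑ i, ∑ j, ∑ k, ∑ l, ((2/(N:ℂ)) * (dl i j * dl k l)) • (ψ j k * ψ l i)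
        = ((2/(N:ℂ)) * ((N:ℂ)^2 - 1)) • (1:A) :=
      calc ∑ i, ∑ j, ∑ k, ∑ l, ((2/(N:ℂ)) * (dl i j * dl k l)) • (ψ j k * ψ l i)
          = ∑ i, ∑ j, ∑ k, ((2/(N:ℂ)) * dl i j) • (ψ j k * ψ k i) := by
            refine Finset.sum_congr rfl fun i _ => Finset.sum_congr rfl fun j _ =>
              Finset.sum_congr rfl fun k _ => ?_
            simp [dl, mul_ite, ite_mul, mul_one, mul_zero, zero_mul, one_mul, ite_smul,
              zero_smul, Finset.sum_ite_eq]
        _ = ∑ i, ∑ k, ∑ j, ((2/(N:ℂ)) * dl i j) • (ψ j k * ψ k i) :=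
            Finset.sum_congr rfl fun _ _ => Finset.sum_comm
        _ = ∑ i, ∑ k, (2/(N:ℂ)) • (ψ i k * ψ k i) := by
            refine Finset.sum_congr rfl fun i _ => Finset.sum_congr rfl fun k _ => ?_
            simp [dl, mul_ite, mul_one, mul_zero, ite_smul, zero_smul, Finset.sum_ite_eq]
        _ = (2/(N:ℂ)) • (∑ i, ∑ k, ψ i k * ψ k i) := by
            rw [Finset.smul_sum]
            exact Finset.sum_congr rfl fun _ _ => (Finset.smul_sum).symm
        _ = ((2/(N:ℂ)) * ((N:ℂ)^2 - 1)) • (1:A) := by rw [hL1, smul_smul]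
    calc ∑ i, ∑ j, ∑ k, ∑ l, cf N i j k l • (ψ j k * ψ l i)
        = ∑ i, ∑ j, ∑ k, ∑ l, (((2:ℂ) * (dl i l * dl j k)) • (ψ j k * ψ l i)
            - ((2/(N:ℂ)) * (dl i j * dl k l)) • (ψ j k * ψ l i)) := by
          exact Finset.sum_congr rfl fun i _ => Finset.sum_congr rfl fun j _ =>
            Finset.sum_congr rfl fun k _ => Finset.sum_congr rfl fun l _ => hsplit i j k l
      _ = (∑ i, ∑ j, ∑ k, ∑ l, ((2:ℂ) * (dl i l * dl j k)) • (ψ j k * ψ l i))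
            - ∑ i, ∑ j, ∑ k, ∑ l, ((2/(N:ℂ)) * (dl i j * dl k l)) • (ψ j k * ψ l i) := by
          simp only [Finset.sum_sub_distrib]
      _ = (0:A) - ((2/(N:ℂ)) * ((N:ℂ)^2 - 1)) • (1:A) := by rw [hT2a, hT2b]
  -- the cyclic reindexing
  have hG : ∑ i, ∑ j, ∑ k, ∑ l, ψ j k * ψ k l * ψ l i * ψ i j
      = ∑ i, ∑ j, ∑ k, ∑ l, ψ i j * ψ j k * ψ k l * ψ l i :=
    cyc4 fun a b c d => ψ b c * ψ c d * ψ d a * ψ a b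
  -- put it together
  have hbig : (∑ i, ∑ j, ∑ k, ∑ l, ψ i j * ψ j k * ψ k l * ψ l i)
      + (∑ i, ∑ j, ∑ k, ∑ l, ψ i j * ψ j k * ψ k l * ψ l i)
      = ((2*((N:ℂ) - 1/(N:ℂ))) * ((N:ℂ)^2 - 1)) • (1:A)
        - ((0:A) - ((2/(N:ℂ)) * ((N:ℂ)^2 - 1)) • (1:A))
        + ((2*((N:ℂ) - 1/(N:ℂ))) * ((N:ℂ)^2 - 1)) • (1:A) := by
    calc (∑ i, ∑ j, ∑ k, ∑ l, ψ i j * ψ j k * ψ k l * ψ l i)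
          + (∑ i, ∑ j, ∑ k, ∑ l, ψ i j * ψ j k * ψ k l * ψ l i)
        = ∑ i, ∑ j, ∑ k, ∑ l, (ψ i j * ψ j k * ψ k l * ψ l i
            + ψ j k * ψ k l * ψ l i * ψ i j) := by
          simp only [Finset.sum_add_distrib]
          rw [hG]
      _ = ∑ i, ∑ j, ∑ k, ∑ l, (cf N i j j k • (ψ k l * ψ l i)
            - cf N i j k l • (ψ j k * ψ l i) + cf N i j l i • (ψ j k * ψ k l)) :=
          Finset.sum_congr rfl fun i _ => Finset.sum_congr rfl fun j _ =>
            Finset.sum_congr rfl fun k _ => Finset.sum_congr rfl fun l _ => key i j k l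
      _ = (∑ i, ∑ j, ∑ k, ∑ l, cf N i j j k • (ψ k l * ψ l i))
            - (∑ i, ∑ j, ∑ k, ∑ l, cf N i j k l • (ψ j k * ψ l i))
            + ∑ i, ∑ j, ∑ k, ∑ l, cf N i j l i • (ψ j k * ψ k l) := by
          simp only [Finset.sum_sub_distrib, Finset.sum_add_distrib]
      _ = _ := by rw [hT1, hT2, hT3]
  constructor
  · have h2S : (2:ℂ) • (∑ i, ∑ j, ∑ k, ∑ l, ψ i j * ψ j k * ψ k l * ψ l i)
        = ((2:ℂ) * (((N:ℂ)^2 - 1) * (2 * (N:ℂ) - 1/(N:ℂ)))) • (1:A) := by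
      rw [two_smul, hbig]
      simp only [zero_sub, sub_neg_eq_add, ← add_smul]
      congr 1
      field_simp
      ring
    have := congrArg (fun x => (2:ℂ)⁻¹ • x) h2S
    simpa [smul_smul, ← mul_assoc, inv_mul_cancel₀ (two_ne_zero (α := ℂ))] using this
  · have hNR : (2:ℝ) ≤ (N:ℝ) := by exact_mod_cast hN
    have hNpos : (0:ℝ) < (N:ℝ) := by linarith
    have h1 : 1/(N:ℝ) ≤ 1 := by
      rw [div_le_one hNpos]; linarith
    have h2 : 0 < 1/(N:ℝ) := by positivity
    nlinarith [sq_nonneg ((N:ℝ)), sq_nonneg ((N:ℝ) - 1)]
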